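/- arXiv:2601.00104 — 6 statements merged into one kernel-verified Lean document; each statement's English description precedes it below -/
import Mathlib

section
/- Let 2 ≤ s ≤ r and let H be an r-uniform hypergraph. If e is an edge of H^(s) and F is the unique copy of K_r^s contained in H^(s) having e among its edges, then V(F) is an edge of H. -/
open scoped Classical

noncomputable section

/-- A (finite) hypergraph: a finite vertex set together with a finite
set of edges, each edge being a subset of the vertex set. -/
structure FinHypergraph (V : Type*) where
  verts : Finset V
  edges : Finset (Finset V)
  edge_sub : ∀ e ∈ edges, e ⊆ verts

namespace FinHypergraph

variable {V : Type*} [DecidableEq V]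

/-- `H` is `r`-uniform if every edge has exactly `r` vertices. -/
def IsUniform (H : FinHypergraph V) (r : ℕ) : Prop :=
  ∀ e ∈ H.edges, e.card = r

/-- The closed neighbourhood `N_H[D]` of a set `D` of vertices. -/
def closedNbhd (H : FinHypergraph V) (D : Finset V) : Finset V :=
  D ∪ H.verts.filter (fun w => ∃ e ∈ H.edges, w ∈ e ∧ ∃ v ∈ D, v ∈ e)

/-- The `s`-th shadow hypergraph `H^(s)`: same vertices, edges are all
`s`-element subsets of edges of `H`. -/
def shadow (H : FinHypergraph V) (s : ℕ) : FinHypergraph V where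
  verts := H.verts
  edges := H.edges.biUnion (fun e => e.powersetCard s)
  edge_sub := by
    intro a ha
    rw [Finset.mem_biUnion] at ha
    obtain ⟨e, he, hae⟩ := ha
    exact (Finset.mem_powersetCard.mp hae).1.trans (H.edge_sub e he)

/-- The subhypergraph of `H` induced by a vertex set `X`. -/
def induce (H : FinHypergraph V) (X : Finset V) : FinHypergraph V where
  verts := X
  edges := H.edges.filter (fun e => e ⊆ X)
  edge_sub := fun _ he => (Finset.mem_filter.mp he).2

/-- `H` contains a copy of `K_k^r`, the complete `r`-uniform hypergraph on
`k` vertices: a `k`-set of vertices all of whose `r`-subsets are edges. -/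
def HasCliqueCopy (H : FinHypergraph V) (k r : ℕ) : Prop :=
  ∃ S : Finset V, S ⊆ H.verts ∧ S.card = k ∧ ∀ A ∈ S.powersetCard r, A ∈ H.edges

/-- `D` is a `K_k^r`-isolating set of `H`: deleting `N_H[D]` leaves no copy of `K_k^r`. -/
def IsIsolating (H : FinHypergraph V) (k r : ℕ) (D : Finset V) : Prop :=
  D ⊆ H.verts ∧ ¬ (H.induce (H.verts \ H.closedNbhd D)).HasCliqueCopy k r

/-- `ι(H, K_k^r)`: the minimum size of a `K_k^r`-isolating set of `H`. -/
def iso (H : FinHypergraph V) (k r : ℕ) : ℕ :=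
  sInf {n | ∃ D : Finset V, H.IsIsolating k r D ∧ D.card = n}

/-- `D` is a dominating set of `H`. -/
def IsDominating (H : FinHypergraph V) (D : Finset V) : Prop :=
  D ⊆ H.verts ∧ H.verts ⊆ H.closedNbhd D

/-- The domination number `γ(H)`. -/
def domNum (H : FinHypergraph V) : ℕ :=
  sInf {n | ∃ D : Finset V, H.IsDominating D ∧ D.card = n}

/-- Two vertices are related if they lie in a common edge. -/
def edgeRel (H : FinHypergraph V) (v w : V) : Prop :=
  ∃ e ∈ H.edges, v ∈ e ∧ w ∈ e

/-- `H` is connected: any two vertices are joined by a chain of pairwise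
intersecting edges (equivalently, by the reflexive-transitive closure of
sharing an edge). -/
def Connected (H : FinHypergraph V) : Prop :=
  ∀ v ∈ H.verts, ∀ w ∈ H.verts, Relation.ReflTransGen H.edgeRel v w

/-- `H` is a copy of `K_k^r`: it has `k` vertices and its edges are exactly
all `r`-subsets of its vertex set. -/
def IsCompleteCopy (H : FinHypergraph V) (k r : ℕ) : Prop :=
  H.verts.card = k ∧ H.edges = H.verts.powersetCard r

/-- `H` is a copy of the 5-cycle `C₅` (as a 2-uniform hypergraph). -/
def IsC5Copy (H : FinHypergraph V) : Prop :=
  ∃ f : Fin 5 → V, Function.Injective f ∧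
    H.verts = Finset.univ.image f ∧
    H.edges = Finset.univ.image (fun i : Fin 5 => ({f i, f (i + 1)} : Finset V))

end FinHypergraph

open FinHypergraph

/-- Lemma (iv): if `e` is an edge of `H^(s)` and `S` is the vertex set of the
unique `K_r^s`-copy of `H^(s)` having `e` among its edges, then `S ∈ E(H)`. -/
theorem stmt3 {V : Type*} [DecidableEq V] (s r : ℕ) (hs : 2 ≤ s) (hsr : s ≤ r)
    (H : FinHypergraph V) (hH : H.IsUniform r) (e S : Finset V)
    (he : e ∈ (H.shadow s).edges)
    (hS : S ⊆ H.verts) (hScard : S.card = r)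
    (hSclique : ∀ A ∈ S.powersetCard s, A ∈ (H.shadow s).edges)
    (heS : e ⊆ S)
    (huniq : ∀ S' : Finset V, S' ⊆ H.verts → S'.card = r →
      (∀ A ∈ S'.powersetCard s, A ∈ (H.shadow s).edges) → e ⊆ S' → S' = S) :
    S ∈ H.edges := by
  rw [shadow, Finset.mem_biUnion] at he
  obtain ⟨f, hf, hef⟩ := he
  rw [Finset.mem_powersetCard] at hef
  have hfS : f = S := by
    apply huniq f (H.edge_sub f hf) (hH f hf) _ hef.1
    intro A hA
    rw [shadow, Finset.mem_biUnion]
    exact ⟨f, hf, hA⟩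
  exact hfS ▸ hf
end
end

section
/- If 1 ≤ k < r and H is an r-uniform hypergraph, then γ(H) − k + 1 ≤ ι(H, K_k^r) ≤ γ(H), where γ(H) is the domination number of H and ι(H, K_k^r) is the minimum size of a K_k^r-isolating set of H. -/
open scoped Classical

noncomputable section

open FinHypergraph

lemma aux_subset_closedNbhd {V : Type*} [DecidableEq V] (H : FinHypergraph V) (D : Finset V) :
    D ⊆ H.closedNbhd D := Finset.subset_union_left

lemma aux_closedNbhd_mono {V : Type*} [DecidableEq V] (H : FinHypergraph V) {D D' : Finset V}
    (h : D ⊆ D') : H.closedNbhd D ⊆ H.closedNbhd D' := by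
  apply Finset.union_subset_union h
  intro w hw
  rw [Finset.mem_filter] at hw ⊢
  obtain ⟨hw1, e, he, hwe, v, hv, hve⟩ := hw
  exact ⟨hw1, e, he, hwe, v, h hv, hve⟩

lemma aux_clique_iff {V : Type*} [DecidableEq V] (H : FinHypergraph V) {k r : ℕ} (hkr : k < r) :
    H.HasCliqueCopy k r ↔ k ≤ H.verts.card := by
  constructor
  · rintro ⟨S, hS, hScard, -⟩
    exact hScard ▸ Finset.card_le_card hS
  · intro h
    obtain ⟨S, hS, hScard⟩ := Finset.exists_subset_card_eq h
    refine ⟨S, hS, hScard, ?_⟩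
    intro A hA
    rw [Finset.mem_powersetCard] at hA
    exact absurd ((hA.2 ▸ Finset.card_le_card hA.1).trans hScard.le) (by omega)

lemma aux_dom_nonempty {V : Type*} [DecidableEq V] (H : FinHypergraph V) :
    {n | ∃ D : Finset V, H.IsDominating D ∧ D.card = n}.Nonempty :=
  ⟨H.verts.card, H.verts, ⟨le_refl _, aux_subset_closedNbhd H _⟩, rfl⟩

/-- For `1 ≤ k < r` and an `r`-graph `H`: `γ(H) − k + 1 ≤ ι(H, K_k^r) ≤ γ(H)`. -/
theorem stmt8 {V : Type*} [DecidableEq V] (r k : ℕ) (hk : 1 ≤ k) (hkr : k < r)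
    (H : FinHypergraph V) (hH : H.IsUniform r) :
    (H.domNum : ℤ) - k + 1 ≤ (H.iso k r : ℤ) ∧ H.iso k r ≤ H.domNum := by
  -- A dominating set is isolating.
  have hdom_iso : ∀ D : Finset V, H.IsDominating D → H.IsIsolating k r D := by
    rintro D ⟨hD1, hD2⟩
    refine ⟨hD1, ?_⟩
    rw [aux_clique_iff _ hkr]
    have : H.verts \ H.closedNbhd D = ∅ := Finset.sdiff_eq_empty_iff_subset.mpr hD2
    simp [FinHypergraph.induce, this]
    omega
  -- Upper bound: ι ≤ γ
  have hub : H.iso k r ≤ H.domNum := by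
    obtain ⟨D, hD, hDc⟩ := Nat.sInf_mem (aux_dom_nonempty H)
    calc H.iso k r ≤ D.card := Nat.sInf_le ⟨D, hdom_iso D hD, rfl⟩
      _ = H.domNum := hDc
  refine ⟨?_, hub⟩
  -- Lower bound
  have hiso_ne : {n | ∃ D : Finset V, H.IsIsolating k r D ∧ D.card = n}.Nonempty := by
    obtain ⟨n, D, hD, hDc⟩ := aux_dom_nonempty H
    exact ⟨n, D, hdom_iso D hD, hDc⟩
  obtain ⟨D, hD, hDc⟩ := Nat.sInf_mem hiso_ne
  set X := H.verts \ H.closedNbhd D with hX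
  have hXcard : X.card ≤ k - 1 := by
    by_contra hlt
    apply hD.2
    rw [aux_clique_iff _ hkr]
    show k ≤ ((H.induce X).verts).card
    simp only [FinHypergraph.induce]
    omega
  have hdom : H.IsDominating (D ∪ X) := by
    constructor
    · exact Finset.union_subset hD.1 (Finset.sdiff_subset)
    · intro v hv
      by_cases hvN : v ∈ H.closedNbhd D
      · exact aux_closedNbhd_mono H Finset.subset_union_left hvN
      · exact aux_subset_closedNbhd H _ (Finset.mem_union_right _ (Finset.mem_sdiff.mpr ⟨hv, hvN⟩))
  have hγ : H.domNum ≤ D.card + (k - 1) := by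
    calc H.domNum ≤ (D ∪ X).card := Nat.sInf_le ⟨D ∪ X, hdom, rfl⟩
      _ ≤ D.card + X.card := Finset.card_union_le _ _
      _ ≤ D.card + (k - 1) := by omega
  rw [hDc] at hγ
  have : H.domNum ≤ H.iso k r + (k - 1) := hγ
  push_cast
  omega
end
end

section
/- For every q ≥ 1 and 1 ≤ k < r, there exists a connected r-uniform hypergraph H with ι(H, K_k^r) = γ(H) = q, so the upper bound ι(H, K_k^r) ≤ γ(H) is tight. -/
open scoped Classical

noncomputable section

/-- A (finite) hypergraph: a finite vertex set together with a finite
set of edges, each edge being a subset of the vertex set. -/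
structure Hypergraph' (V : Type*) where
  verts : Finset V
  edges : Finset (Finset V)
  edge_sub : ∀ e ∈ edges, e ⊆ verts

namespace Hypergraph'

variable {V : Type*} [DecidableEq V]

/-- `H` is `r`-uniform if every edge has exactly `r` vertices. -/
def IsUniform (H : Hypergraph' V) (r : ℕ) : Prop :=
  ∀ e ∈ H.edges, e.card = r

/-- The closed neighbourhood `N_H[D]` of a set `D` of vertices. -/
def closedNbhd (H : Hypergraph' V) (D : Finset V) : Finset V :=
  D ∪ H.verts.filter (fun w => ∃ e ∈ H.edges, w ∈ e ∧ ∃ v ∈ D, v ∈ e)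

/-- The `s`-th shadow hypergraph `H^(s)`: same vertices, edges are all
`s`-element subsets of edges of `H`. -/
def shadow (H : Hypergraph' V) (s : ℕ) : Hypergraph' V where
  verts := H.verts
  edges := H.edges.biUnion (fun e => e.powersetCard s)
  edge_sub := by
    intro a ha
    rw [Finset.mem_biUnion] at ha
    obtain ⟨e, he, hae⟩ := ha
    exact (Finset.mem_powersetCard.mp hae).1.trans (H.edge_sub e he)

/-- The subhypergraph of `H` induced by a vertex set `X`. -/
def induce (H : Hypergraph' V) (X : Finset V) : Hypergraph' V where
  verts := X
  edges := H.edges.filter (fun e => e ⊆ X)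
  edge_sub := fun _ he => (Finset.mem_filter.mp he).2

/-- `H` contains a copy of `K_k^r`, the complete `r`-uniform hypergraph on
`k` vertices: a `k`-set of vertices all of whose `r`-subsets are edges. -/
def HasCliqueCopy (H : Hypergraph' V) (k r : ℕ) : Prop :=
  ∃ S : Finset V, S ⊆ H.verts ∧ S.card = k ∧ ∀ A ∈ S.powersetCard r, A ∈ H.edges

/-- `D` is a `K_k^r`-isolating set of `H`: deleting `N_H[D]` leaves no copy of `K_k^r`. -/
def IsIsolating (H : Hypergraph' V) (k r : ℕ) (D : Finset V) : Prop :=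
  D ⊆ H.verts ∧ ¬ (H.induce (H.verts \ H.closedNbhd D)).HasCliqueCopy k r

/-- `ι(H, K_k^r)`: the minimum size of a `K_k^r`-isolating set of `H`. -/
def iso (H : Hypergraph' V) (k r : ℕ) : ℕ :=
  sInf {n | ∃ D : Finset V, H.IsIsolating k r D ∧ D.card = n}

/-- `D` is a dominating set of `H`. -/
def IsDominating (H : Hypergraph' V) (D : Finset V) : Prop :=
  D ⊆ H.verts ∧ H.verts ⊆ H.closedNbhd D

/-- The domination number `γ(H)`. -/
def domNum (H : Hypergraph' V) : ℕ :=
  sInf {n | ∃ D : Finset V, H.IsDominating D ∧ D.card = n}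

/-- Two vertices are related if they lie in a common edge. -/
def edgeRel (H : Hypergraph' V) (v w : V) : Prop :=
  ∃ e ∈ H.edges, v ∈ e ∧ w ∈ e

/-- `H` is connected: any two vertices are joined by a chain of pairwise
intersecting edges (equivalently, by the reflexive-transitive closure of
sharing an edge). -/
def Connected (H : Hypergraph' V) : Prop :=
  ∀ v ∈ H.verts, ∀ w ∈ H.verts, Relation.ReflTransGen H.edgeRel v w

/-- `H` is a copy of `K_k^r`: it has `k` vertices and its edges are exactly
all `r`-subsets of its vertex set. -/
def IsCompleteCopy (H : Hypergraph' V) (k r : ℕ) : Prop :=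
  H.verts.card = k ∧ H.edges = H.verts.powersetCard r

/-- `H` is a copy of the 5-cycle `C₅` (as a 2-uniform hypergraph). -/
def IsC5Copy (H : Hypergraph' V) : Prop :=
  ∃ f : Fin 5 → V, Function.Injective f ∧
    H.verts = Finset.univ.image f ∧
    H.edges = Finset.univ.image (fun i : Fin 5 => ({f i, f (i + 1)} : Finset V))

end Hypergraph'

open Hypergraph'

namespace TightAux

def fv (r i j : ℕ) : ℕ := 3 * (r * i + j)
def vv (i : ℕ) : ℕ := 3 * i + 1
def cv (r i j : ℕ) : ℕ := 3 * (r * i + j) + 2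

def Fi (r i : ℕ) : Finset ℕ := (Finset.range r).image (fv r i)
def Ci (r i : ℕ) : Finset ℕ := (Finset.range (r - 2)).image (cv r i)
def Gi (r i : ℕ) : Finset ℕ := insert (vv i) (Fi r i)

def Sedge (r i j : ℕ) : Finset ℕ := insert (vv i) (Fi r i \ {fv r i j})
def Eedge (r i : ℕ) : Finset ℕ := insert (vv i) (insert (vv (i + 1)) (Ci r i))

def Vs (q r : ℕ) : Finset ℕ :=
  ((Finset.range q).biUnion fun i => Gi r i) ∪ (Finset.range (q - 1)).biUnion (Ci r)

def Ed (q r : ℕ) : Finset (Finset ℕ) :=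
  (((Finset.range q).image fun i => Sedge r i 0) ∪
    ((Finset.range q).image fun i => Sedge r i 1)) ∪
  (Finset.range (q - 1)).image (Eedge r)

lemma enc_lt {r i j i' j' : ℕ} (hj : j < r) (h : i < i') :
    r * i + j < r * i' + j' := by
  have h1 : r * (i + 1) ≤ r * i' := Nat.mul_le_mul_left _ h
  rw [Nat.mul_succ] at h1
  omega

lemma enc_inj {r i j i' j' : ℕ} (hj : j < r) (hj' : j' < r)
    (h : r * i + j = r * i' + j') : i = i' ∧ j = j' := by
  rcases lt_trichotomy i i' with h1 | h1 | h1
  · exact absurd h (Nat.ne_of_lt (enc_lt hj h1))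
  · subst h1; omega
  · exact absurd h.symm (Nat.ne_of_lt (enc_lt hj' h1))

lemma fv_inj {r i j i' j' : ℕ} (hj : j < r) (hj' : j' < r)
    (h : fv r i j = fv r i' j') : i = i' ∧ j = j' := by
  apply enc_inj hj hj'
  unfold fv at h; omega

lemma mem_Fi {r i x : ℕ} : x ∈ Fi r i ↔ ∃ j, j < r ∧ x = fv r i j := by
  simp [Fi, eq_comm]

lemma mem_Ci {r i x : ℕ} : x ∈ Ci r i ↔ ∃ j, j < r - 2 ∧ x = cv r i j := by
  simp [Ci, eq_comm]

lemma vv_not_mem_Fi {r i i' : ℕ} : vv i ∉ Fi r i' := by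
  rw [mem_Fi]
  rintro ⟨j, hj, h⟩
  unfold vv fv at h; omega

lemma vv_not_mem_Ci {r i i' : ℕ} : vv i ∉ Ci r i' := by
  rw [mem_Ci]
  rintro ⟨j, hj, h⟩
  unfold vv cv at h; omega

lemma fv_not_mem_Ci {r i j i' : ℕ} : fv r i j ∉ Ci r i' := by
  rw [mem_Ci]
  rintro ⟨j', hj', h⟩
  unfold fv cv at h; omega

lemma card_Fi {r i : ℕ} : (Fi r i).card = r := by
  rw [Fi, Finset.card_image_of_injOn, Finset.card_range]
  intro a ha b hb h
  exact (fv_inj (Finset.mem_range.mp ha) (Finset.mem_range.mp hb) h).2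

lemma card_Ci {r i : ℕ} : (Ci r i).card = r - 2 := by
  rw [Ci, Finset.card_image_of_injOn, Finset.card_range]
  intro a ha b hb h
  unfold cv at h
  omega

lemma card_Sedge {r i j : ℕ} (hr : 1 ≤ r) (hj : j < r) : (Sedge r i j).card = r := by
  rw [Sedge, Finset.card_insert_of_notMem, Finset.sdiff_singleton_eq_erase,
    Finset.card_erase_of_mem (mem_Fi.mpr ⟨j, hj, rfl⟩), card_Fi]
  · omega
  · intro h
    exact vv_not_mem_Fi (Finset.mem_sdiff.mp h).1

lemma card_Eedge {r i : ℕ} (hr : 2 ≤ r) : (Eedge r i).card = r := by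
  rw [Eedge, Finset.card_insert_of_notMem, Finset.card_insert_of_notMem vv_not_mem_Ci,
    card_Ci]
  · omega
  · intro h
    rcases Finset.mem_insert.mp h with h | h
    · unfold vv at h; omega
    · exact vv_not_mem_Ci h

lemma Sedge_sub {q r i : ℕ} (hi : i < q) (j : ℕ) : Sedge r i j ⊆ Vs q r := by
  intro x hx
  apply Finset.mem_union_left
  apply Finset.mem_biUnion.mpr ⟨i, Finset.mem_range.mpr hi, ?_⟩
  rcases Finset.mem_insert.mp hx with h | h
  · exact h ▸ Finset.mem_insert_self _ _
  · exact Finset.mem_insert_of_mem (Finset.mem_sdiff.mp h).1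

lemma Eedge_sub {q r i : ℕ} (hi : i < q - 1) : Eedge r i ⊆ Vs q r := by
  intro x hx
  rcases Finset.mem_insert.mp hx with h | h
  · exact h ▸ Finset.mem_union_left _ (Finset.mem_biUnion.mpr
      ⟨i, Finset.mem_range.mpr (by omega), Finset.mem_insert_self _ _⟩)
  rcases Finset.mem_insert.mp h with h | h
  · exact h ▸ Finset.mem_union_left _ (Finset.mem_biUnion.mpr
      ⟨i + 1, Finset.mem_range.mpr (by omega), Finset.mem_insert_self _ _⟩)
  · exact Finset.mem_union_right _ (Finset.mem_biUnion.mpr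
      ⟨i, Finset.mem_range.mpr hi, h⟩)

lemma mem_Ed {q r : ℕ} {e : Finset ℕ} :
    e ∈ Ed q r ↔ (∃ i < q, e = Sedge r i 0 ∨ e = Sedge r i 1) ∨
      (∃ i < q - 1, e = Eedge r i) := by
  simp only [Ed, Finset.mem_union, Finset.mem_image, Finset.mem_range]
  constructor
  · rintro ((⟨i, hi, rfl⟩ | ⟨i, hi, rfl⟩) | ⟨i, hi, rfl⟩)
    · exact Or.inl ⟨i, hi, Or.inl rfl⟩
    · exact Or.inl ⟨i, hi, Or.inr rfl⟩
    · exact Or.inr ⟨i, hi, rfl⟩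
  · rintro (⟨i, hi, rfl | rfl⟩ | ⟨i, hi, rfl⟩)
    · exact Or.inl (Or.inl ⟨i, hi, rfl⟩)
    · exact Or.inl (Or.inr ⟨i, hi, rfl⟩)
    · exact Or.inr ⟨i, hi, rfl⟩

lemma Sedge_mem {q r i : ℕ} (hi : i < q) {j : ℕ} (hj : j = 0 ∨ j = 1) :
    Sedge r i j ∈ Ed q r := by
  rcases hj with rfl | rfl
  · exact mem_Ed.mpr (Or.inl ⟨i, hi, Or.inl rfl⟩)
  · exact mem_Ed.mpr (Or.inl ⟨i, hi, Or.inr rfl⟩)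

lemma Eedge_mem {q r i : ℕ} (hi : i < q - 1) : Eedge r i ∈ Ed q r :=
  mem_Ed.mpr (Or.inr ⟨i, hi, rfl⟩)

/-- The block hypergraph. -/
def Hy (q r : ℕ) : Hypergraph' ℕ where
  verts := Vs q r
  edges := Ed q r
  edge_sub := by
    intro e he
    rcases mem_Ed.mp he with ⟨i, hi, rfl | rfl⟩ | ⟨i, hi, rfl⟩
    · exact Sedge_sub hi 0
    · exact Sedge_sub hi 1
    · exact Eedge_sub hi

lemma Gi_disj {r i i' x : ℕ} (hx : x ∈ Gi r i) (hx' : x ∈ Gi r i') : i = i' := by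
  rcases Finset.mem_insert.mp hx with rfl | hx
  · rcases Finset.mem_insert.mp hx' with h | hx'
    · unfold vv at h; omega
    · exact absurd hx' vv_not_mem_Fi
  · rcases Finset.mem_insert.mp hx' with rfl | hx'
    · exact absurd hx vv_not_mem_Fi
    · rcases mem_Fi.mp hx with ⟨j, hj, rfl⟩
      rcases mem_Fi.mp hx' with ⟨j', hj', h⟩
      exact (fv_inj hj hj' h).1

lemma Sedge_sub_Gi {r i j : ℕ} : Sedge r i j ⊆ Gi r i := by
  intro x hx
  rcases Finset.mem_insert.mp hx with rfl | hx
  · exact Finset.mem_insert_self _ _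
  · exact Finset.mem_insert_of_mem (Finset.mem_sdiff.mp hx).1

lemma edge_of_fv {q r i j : ℕ} {e : Finset ℕ} (hj : j < r)
    (he : e ∈ Ed q r) (hfe : fv r i j ∈ e) : e ⊆ Gi r i := by
  have hS : ∀ i' j', fv r i j ∈ Sedge r i' j' → i = i' := by
    intro i' j' h
    rcases Finset.mem_insert.mp h with h | h
    · unfold fv vv at h; omega
    · rcases mem_Fi.mp (Finset.mem_sdiff.mp h).1 with ⟨j2, hj2, h2⟩
      exact (fv_inj hj hj2 h2).1
  rcases mem_Ed.mp he with ⟨i', hi', rfl | rfl⟩ | ⟨i', hi', rfl⟩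
  · rw [hS i' 0 hfe]; exact Sedge_sub_Gi
  · rw [hS i' 1 hfe]; exact Sedge_sub_Gi
  · exfalso
    rcases Finset.mem_insert.mp hfe with h | h
    · unfold fv vv at h; omega
    rcases Finset.mem_insert.mp h with h | h
    · unfold fv vv at h; omega
    · exact fv_not_mem_Ci h

lemma mem_closedNbhd_of_edge {q r : ℕ} {D : Finset ℕ} {w d : ℕ} {e : Finset ℕ}
    (he : e ∈ Ed q r) (hw : w ∈ e) (hd : d ∈ D) (hde : d ∈ e) :
    w ∈ (Hy q r).closedNbhd D := by
  apply Finset.mem_union_right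
  exact Finset.mem_filter.mpr ⟨(Hy q r).edge_sub e he hw, e, he, hw, d, hd, hde⟩

lemma hit {q r i : ℕ} {D : Finset ℕ}
    (hw : ∃ w ∈ Fi r i, w ∈ (Hy q r).closedNbhd D) :
    ∃ d ∈ D, d ∈ Gi r i := by
  obtain ⟨w, hwF, hwN⟩ := hw
  rcases Finset.mem_union.mp hwN with h | h
  · exact ⟨w, h, Finset.mem_insert_of_mem hwF⟩
  · obtain ⟨hwV, e, he, hwe, d, hd, hde⟩ := Finset.mem_filter.mp h
    rcases mem_Fi.mp hwF with ⟨j, hj, rfl⟩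
    exact ⟨d, hd, edge_of_fv hj he hwe hde⟩

lemma card_lower {q r : ℕ} {D : Finset ℕ}
    (hhit : ∀ i < q, ∃ d ∈ D, d ∈ Gi r i) : q ≤ D.card := by
  have h : ∀ i, ∃ d, i < q → d ∈ D ∧ d ∈ Gi r i := by
    intro i
    by_cases hi : i < q
    · obtain ⟨d, hd1, hd2⟩ := hhit i hi
      exact ⟨d, fun _ => ⟨hd1, hd2⟩⟩
    · exact ⟨0, fun h => absurd h hi⟩
  choose f hf using h
  calc q = (Finset.range q).card := (Finset.card_range q).symm
    _ ≤ D.card := by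
        apply Finset.card_le_card_of_injOn f
          (fun i hi => (hf i (Finset.mem_range.mp hi)).1)
        intro i hi i' hi' hEq
        have h1 := (hf i (Finset.mem_range.mp hi)).2
        have h2 := (hf i' (Finset.mem_range.mp hi')).2
        rw [← hEq] at h2
        exact Gi_disj h1 h2

def D0 (q : ℕ) : Finset ℕ := (Finset.range q).image vv

lemma card_D0 {q : ℕ} : (D0 q).card = q := by
  rw [D0, Finset.card_image_of_injOn, Finset.card_range]
  intro a _ b _ h; unfold vv at h; omega

lemma D0_sub {q r : ℕ} : D0 q ⊆ Vs q r := by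
  intro x hx
  rcases Finset.mem_image.mp hx with ⟨i, hi, rfl⟩
  exact Finset.mem_union_left _ (Finset.mem_biUnion.mpr ⟨i, hi, Finset.mem_insert_self _ _⟩)

lemma fv_mem_Sedge {r i j j' : ℕ} (hj : j < r) (hne : j ≠ j') (hj' : j' < r) :
    fv r i j ∈ Sedge r i j' := by
  apply Finset.mem_insert_of_mem
  refine Finset.mem_sdiff.mpr ⟨mem_Fi.mpr ⟨j, hj, rfl⟩, ?_⟩
  simp only [Finset.mem_singleton]
  intro h
  exact hne (fv_inj hj hj' h).2

lemma other_index {r j : ℕ} (hr : 2 ≤ r) (hj : j < r) :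
    ∃ j', (j' = 0 ∨ j' = 1) ∧ j ≠ j' ∧ j' < r := by
  by_cases h : j = 0
  · exact ⟨1, Or.inr rfl, by omega, by omega⟩
  · exact ⟨0, Or.inl rfl, by omega, by omega⟩

lemma dominating_D0 {q r : ℕ} (hr : 2 ≤ r) : (Hy q r).IsDominating (D0 q) := by
  refine ⟨D0_sub, ?_⟩
  intro w hw
  rcases Finset.mem_union.mp hw with h | h
  · rcases Finset.mem_biUnion.mp h with ⟨i, hi, hGi⟩
    rcases Finset.mem_insert.mp hGi with rfl | hF
    · exact Finset.mem_union_left _ (Finset.mem_image.mpr ⟨i, hi, rfl⟩)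
    · rcases mem_Fi.mp hF with ⟨j, hj, rfl⟩
      obtain ⟨j', hj'01, hne, hj'⟩ := other_index hr hj
      exact mem_closedNbhd_of_edge (Sedge_mem (Finset.mem_range.mp hi) hj'01)
        (fv_mem_Sedge hj hne hj')
        (Finset.mem_image.mpr ⟨i, hi, rfl⟩) (Finset.mem_insert_self _ _)
  · rcases Finset.mem_biUnion.mp h with ⟨i, hi, hC⟩
    have hi' := Finset.mem_range.mp hi
    exact mem_closedNbhd_of_edge (Eedge_mem hi')
      (Finset.mem_insert_of_mem (Finset.mem_insert_of_mem hC))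
      (Finset.mem_image.mpr ⟨i, Finset.mem_range.mpr (by omega), rfl⟩)
      (Finset.mem_insert_self _ _)

lemma isolating_iff {q r k : ℕ} (hkr : k < r) {D : Finset ℕ} :
    (Hy q r).IsIsolating k r D ↔
      D ⊆ Vs q r ∧ ((Vs q r) \ (Hy q r).closedNbhd D).card < k := by
  unfold Hypergraph'.IsIsolating
  constructor
  · rintro ⟨h1, h2⟩
    refine ⟨h1, ?_⟩
    by_contra hcard
    push_neg at hcard
    apply h2
    obtain ⟨S, hS, hScard⟩ := Finset.exists_subset_card_eq hcard
    refine ⟨S, hS, hScard, ?_⟩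
    intro A hA
    obtain ⟨hAS, hAcard⟩ := Finset.mem_powersetCard.mp hA
    have hle : A.card ≤ S.card := Finset.card_le_card hAS
    exact absurd (by omega : r ≤ k) (Nat.not_le.mpr hkr)
  · rintro ⟨h1, h2⟩
    refine ⟨h1, ?_⟩
    rintro ⟨S, hS, hScard, -⟩
    have hle : S.card ≤ ((Vs q r) \ (Hy q r).closedNbhd D).card := Finset.card_le_card hS
    omega

lemma chain {q r : ℕ} : ∀ i, i < q →
    Relation.ReflTransGen (Hy q r).edgeRel (vv 0) (vv i) := by
  intro i
  induction i with
  | zero => exact fun _ => Relation.ReflTransGen.refl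
  | succ i ih =>
      intro h
      exact Relation.ReflTransGen.tail (ih (by omega))
        ⟨Eedge r i, Eedge_mem (by omega), Finset.mem_insert_self _ _,
          Finset.mem_insert_of_mem (Finset.mem_insert_self _ _)⟩

lemma rel_v0 {q r : ℕ} (hr : 2 ≤ r) :
    ∀ w ∈ Vs q r, Relation.ReflTransGen (Hy q r).edgeRel (vv 0) w := by
  intro w hw
  rcases Finset.mem_union.mp hw with h | h
  · rcases Finset.mem_biUnion.mp h with ⟨i, hi, hGi⟩
    have hi' := Finset.mem_range.mp hi
    rcases Finset.mem_insert.mp hGi with rfl | hF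
    · exact chain i hi'
    · rcases mem_Fi.mp hF with ⟨j, hj, rfl⟩
      obtain ⟨j', hj'01, hne, hj'r⟩ := other_index hr hj
      exact Relation.ReflTransGen.tail (chain i hi')
        ⟨Sedge r i j', Sedge_mem hi' hj'01, Finset.mem_insert_self _ _,
          fv_mem_Sedge hj hne hj'r⟩
  · rcases Finset.mem_biUnion.mp h with ⟨i, hi, hC⟩
    have hi' := Finset.mem_range.mp hi
    exact Relation.ReflTransGen.tail (chain i (by omega))
      ⟨Eedge r i, Eedge_mem hi', Finset.mem_insert_self _ _,
        Finset.mem_insert_of_mem (Finset.mem_insert_of_mem hC)⟩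

lemma connected_Hy {q r : ℕ} (hr : 2 ≤ r) : (Hy q r).Connected := by
  intro v hv w hw
  have hsym : Symmetric (Hy q r).edgeRel := by
    rintro a b ⟨e, he, ha, hb⟩
    exact ⟨e, he, hb, ha⟩
  haveI : Std.Symm (Hy q r).edgeRel := ⟨fun a b h => hsym h⟩
  exact Relation.ReflTransGen.trans
    (Std.Symm.symm _ _ (rel_v0 hr v hv)) (rel_v0 hr w hw)

lemma fv_mem_Vs {q r i j : ℕ} (hi : i < q) (hj : j < r) : fv r i j ∈ Vs q r :=
  Finset.mem_union_left _ (Finset.mem_biUnion.mpr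
    ⟨i, Finset.mem_range.mpr hi, Finset.mem_insert_of_mem (mem_Fi.mpr ⟨j, hj, rfl⟩)⟩)

end TightAux


/-- For every `q ≥ 1` and `1 ≤ k < r` there is a connected `r`-graph `H` with
`ι(H, K_k^r) = γ(H) = q`; the bound `ι ≤ γ` is tight. -/
theorem stmt10 (q r k : ℕ) (hq : 1 ≤ q) (hk : 1 ≤ k) (hkr : k < r) :
    ∃ H : Hypergraph' ℕ, H.Connected ∧ H.IsUniform r ∧
      H.iso k r = q ∧ H.domNum = q := by
  have hr2 : 2 ≤ r := by omega
  open TightAux in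
  refine ⟨Hy q r, connected_Hy hr2, ?_, ?_, ?_⟩
  · intro e he
    rcases mem_Ed.mp he with ⟨i, hi, rfl | rfl⟩ | ⟨i, hi, rfl⟩
    · exact card_Sedge (by omega) (by omega)
    · exact card_Sedge (by omega) (by omega)
    · exact card_Eedge hr2
  · have hmem : q ∈ {n | ∃ D : Finset ℕ, (Hy q r).IsIsolating k r D ∧ D.card = n} := by
      refine ⟨D0 q, (isolating_iff hkr).mpr ⟨D0_sub, ?_⟩, card_D0⟩
      have hsub : Vs q r ⊆ (Hy q r).closedNbhd (D0 q) := (dominating_D0 (q := q) hr2).2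
      rw [Finset.sdiff_eq_empty_iff_subset.mpr hsub]
      simpa using (show 0 < k by omega)
    have hlb : ∀ n ∈ {n | ∃ D : Finset ℕ, (Hy q r).IsIsolating k r D ∧ D.card = n},
        q ≤ n := by
      rintro n ⟨D, hD, rfl⟩
      obtain ⟨hDsub, hcard⟩ := (isolating_iff hkr).mp hD
      apply card_lower
      intro i hi
      apply hit
      by_contra hno
      push_neg at hno
      have hFsub : Fi r i ⊆ Vs q r \ (Hy q r).closedNbhd D := by
        intro w hw
        rcases mem_Fi.mp hw with ⟨j, hj, rfl⟩
        exact Finset.mem_sdiff.mpr ⟨fv_mem_Vs hi hj, hno _ hw⟩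
      have hle := Finset.card_le_card hFsub
      rw [card_Fi] at hle
      omega
    have hne : {n | ∃ D : Finset ℕ, (Hy q r).IsIsolating k r D ∧ D.card = n}.Nonempty :=
      ⟨q, hmem⟩
    exact le_antisymm (Nat.sInf_le hmem) (hlb _ (Nat.sInf_mem hne))
  · have hmem : q ∈ {n | ∃ D : Finset ℕ, (Hy q r).IsDominating D ∧ D.card = n} :=
      ⟨D0 q, dominating_D0 hr2, card_D0⟩
    have hlb : ∀ n ∈ {n | ∃ D : Finset ℕ, (Hy q r).IsDominating D ∧ D.card = n},
        q ≤ n := by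
      rintro n ⟨D, ⟨hDsub, hDdom⟩, rfl⟩
      apply card_lower
      intro i hi
      exact hit ⟨fv r i 0, mem_Fi.mpr ⟨0, by omega, rfl⟩, hDdom (fv_mem_Vs hi (by omega))⟩
    have hne : {n | ∃ D : Finset ℕ, (Hy q r).IsDominating D ∧ D.card = n}.Nonempty :=
      ⟨q, hmem⟩
    exact le_antisymm (Nat.sInf_le hmem) (hlb _ (Nat.sInf_mem hne))
end
end

section
/- For every q ≥ 1 and 1 ≤ k < r, there exists a connected r-uniform hypergraph I with ι(I, K_k^r) = q and γ(I) = q + k − 1, so the lower bound γ(H) − k + 1 ≤ ι(H, K_k^r) is tight. -/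
open scoped Classical

noncomputable section

open FinHypergraph

namespace IsoTight

open Finset

/-! ### The construction

Vertices are `0, …, T-1` where `T = q*r + (q-1)*(r-2) + (k-1)*r`.
* Block `j` (`j < q`): the interval `[j*r, (j+1)*r)`, a single edge; its
  "leader" is `c_j = j*r`.
* Connector `j` (`j < q-1`): edge `{j*r, (j+1)*r} ∪ M_j` where `M_j` is an
  interval of `r-2` fresh "middle" vertices.
* Pendant `i` (`i < k-1`): a set `P_i` of `r-1` fresh vertices plus one more
  fresh vertex `s_i`; edges `{(q-1)*r} ∪ P_i` and `P_i ∪ {s_i}`.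
-/

def blockE (r j : ℕ) : Finset ℕ := Finset.Ico (j*r) (j*r+r)

def Bo (q r : ℕ) : ℕ := q*r + (q-1)*(r-2)

def connE (q r j : ℕ) : Finset ℕ :=
  insert (j*r) (insert ((j+1)*r)
    (Finset.Ico (q*r + j*(r-2)) (q*r + j*(r-2) + (r-2))))

def pend1E (q r i : ℕ) : Finset ℕ :=
  insert ((q-1)*r) (Finset.Ico (Bo q r + i*r) (Bo q r + i*r + (r-1)))

def pend2E (q r i : ℕ) : Finset ℕ :=
  Finset.Ico (Bo q r + i*r) (Bo q r + i*r + r)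

def T (q r k : ℕ) : ℕ := Bo q r + (k-1)*r

def rawEdges (q r k : ℕ) : Finset (Finset ℕ) :=
  ((Finset.range q).image (blockE r))
    ∪ ((Finset.range (q-1)).image (connE q r))
    ∪ ((Finset.range (k-1)).image (pend1E q r))
    ∪ ((Finset.range (k-1)).image (pend2E q r))

def IG (q r k : ℕ) : FinHypergraph ℕ where
  verts := Finset.range (T q r k)
  edges := (rawEdges q r k).filter (fun e => e ⊆ Finset.range (T q r k))
  edge_sub := fun _ he => (Finset.mem_filter.mp he).2

lemma mem_verts {q r k v : ℕ} : v ∈ (IG q r k).verts ↔ v < T q r k := by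
  simp [IG]

lemma mem_rawEdges {q r k : ℕ} {e : Finset ℕ} : e ∈ rawEdges q r k ↔
    (∃ j < q, e = blockE r j) ∨ (∃ j < q-1, e = connE q r j) ∨
    (∃ i < k-1, e = pend1E q r i) ∨ (∃ i < k-1, e = pend2E q r i) := by
  simp only [rawEdges, Finset.mem_union, Finset.mem_image, Finset.mem_range]
  constructor
  · rintro (((⟨j, hj, rfl⟩ | ⟨j, hj, rfl⟩) | ⟨i, hi, rfl⟩) | ⟨i, hi, rfl⟩)
    · exact Or.inl ⟨j, hj, rfl⟩
    · exact Or.inr (Or.inl ⟨j, hj, rfl⟩)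
    · exact Or.inr (Or.inr (Or.inl ⟨i, hi, rfl⟩))
    · exact Or.inr (Or.inr (Or.inr ⟨i, hi, rfl⟩))
  · rintro (⟨j, hj, rfl⟩ | ⟨j, hj, rfl⟩ | ⟨i, hi, rfl⟩ | ⟨i, hi, rfl⟩)
    · exact Or.inl (Or.inl (Or.inl ⟨j, hj, rfl⟩))
    · exact Or.inl (Or.inl (Or.inr ⟨j, hj, rfl⟩))
    · exact Or.inl (Or.inr ⟨i, hi, rfl⟩)
    · exact Or.inr ⟨i, hi, rfl⟩

lemma blockE_sub {q r k j : ℕ} (hj : j < q) :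
    blockE r j ⊆ Finset.range (T q r k) := by
  intro v hv
  simp only [blockE, Finset.mem_Ico] at hv
  have h1 : (j+1)*r ≤ q*r := Nat.mul_le_mul_right _ (by omega)
  have h2 : j*r + r = (j+1)*r := by ring
  simp only [Finset.mem_range, T, Bo]; omega

lemma connE_sub {q r k j : ℕ} (hr : 2 ≤ r) (hj : j < q-1) :
    connE q r j ⊆ Finset.range (T q r k) := by
  intro v hv
  simp only [connE, Finset.mem_insert, Finset.mem_Ico] at hv
  have h1 : (j+1)*r ≤ q*r := Nat.mul_le_mul_right _ (by omega)
  have h0 : (j+2)*r ≤ q*r := Nat.mul_le_mul_right _ (by omega)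
  have h0' : (j+1)*r + r = (j+2)*r := by ring
  have h1' : j*r + r = (j+1)*r := by ring
  have h2 : (j+1)*(r-2) ≤ (q-1)*(r-2) := Nat.mul_le_mul_right _ (by omega)
  have h3 : j*(r-2) + (r-2) = (j+1)*(r-2) := by ring
  simp only [Finset.mem_range, T, Bo]
  rcases hv with rfl | rfl | hv <;> omega

lemma pend1E_sub {q r k i : ℕ} (hq : 1 ≤ q) (hr : 2 ≤ r) (hi : i < k-1) :
    pend1E q r i ⊆ Finset.range (T q r k) := by
  intro v hv
  simp only [pend1E, Finset.mem_insert, Finset.mem_Ico] at hv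
  have h1 : ((q-1)+1)*r = q*r := by rw [show q-1+1 = q from by omega]
  have h1' : (q-1)*r + r = ((q-1)+1)*r := by ring
  have h2 : (i+1)*r ≤ (k-1)*r := Nat.mul_le_mul_right _ (by omega)
  have h3 : i*r + r = (i+1)*r := by ring
  have h4 : q*r ≤ Bo q r := Nat.le_add_right _ _
  simp only [Finset.mem_range, T]
  rcases hv with rfl | hv <;> omega

lemma pend2E_sub {q r k i : ℕ} (hi : i < k-1) :
    pend2E q r i ⊆ Finset.range (T q r k) := by
  intro v hv
  simp only [pend2E, Finset.mem_Ico] at hv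
  have h2 : (i+1)*r ≤ (k-1)*r := Nat.mul_le_mul_right _ (by omega)
  have h3 : i*r + r = (i+1)*r := by ring
  simp only [Finset.mem_range, T]; omega

lemma mem_edges {q r k : ℕ} (hq : 1 ≤ q) (hr : 2 ≤ r) {e : Finset ℕ} :
    e ∈ (IG q r k).edges ↔
    (∃ j < q, e = blockE r j) ∨ (∃ j < q-1, e = connE q r j) ∨
    (∃ i < k-1, e = pend1E q r i) ∨ (∃ i < k-1, e = pend2E q r i) := by
  simp only [IG, Finset.mem_filter]
  constructor
  · exact fun h => mem_rawEdges.mp h.1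
  · intro h
    refine ⟨mem_rawEdges.mpr h, ?_⟩
    rcases h with ⟨j, hj, rfl⟩ | ⟨j, hj, rfl⟩ | ⟨i, hi, rfl⟩ | ⟨i, hi, rfl⟩
    · exact blockE_sub hj
    · exact connE_sub hr hj
    · exact pend1E_sub hq hr hi
    · exact pend2E_sub hi

lemma mem_closedNbhd {V : Type*} [DecidableEq V] {H : FinHypergraph V} {D : Finset V} {v : V} :
    v ∈ H.closedNbhd D ↔ v ∈ D ∨ (v ∈ H.verts ∧ ∃ e ∈ H.edges, v ∈ e ∧ ∃ u ∈ D, u ∈ e) := by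
  simp [FinHypergraph.closedNbhd, Finset.mem_union, Finset.mem_filter]

lemma clique_iff {V : Type*} [DecidableEq V] {H : FinHypergraph V} {k r : ℕ} (hkr : k < r) :
    H.HasCliqueCopy k r ↔ k ≤ H.verts.card := by
  constructor
  · rintro ⟨S, hS, hcard, -⟩
    exact hcard ▸ Finset.card_le_card hS
  · intro h
    obtain ⟨S, hS, hcard⟩ := Finset.exists_subset_card_eq h
    refine ⟨S, hS, hcard, fun A hA => ?_⟩
    obtain ⟨h1, h2⟩ := Finset.mem_powersetCard.mp hA
    have := Finset.card_le_card h1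
    omega

lemma isolating_iff {V : Type*} [DecidableEq V] {H : FinHypergraph V} {k r : ℕ} {D : Finset V}
    (hkr : k < r) :
    H.IsIsolating k r D ↔ D ⊆ H.verts ∧ (H.verts \ H.closedNbhd D).card < k := by
  unfold FinHypergraph.IsIsolating
  rw [clique_iff hkr]
  simp only [FinHypergraph.induce, not_le]

/-- Generic counting lemma. -/
lemma card_lb (D : Finset ℕ) (n : ℕ) (g : ℕ → Finset ℕ)
    (hdis : ∀ a < n, ∀ b < n, a ≠ b → Disjoint (g a) (g b))
    (hne : ∀ t < n, (D ∩ g t).Nonempty) : n ≤ D.card := by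
  have h1 : n = ∑ t ∈ Finset.range n, 1 := by simp
  have h2 : ∑ t ∈ Finset.range n, 1 ≤ ∑ t ∈ Finset.range n, (D ∩ g t).card := by
    refine Finset.sum_le_sum fun t ht => ?_
    exact Finset.card_pos.mpr (hne t (Finset.mem_range.mp ht))
  have h3 : ∑ t ∈ Finset.range n, (D ∩ g t).card
      = ((Finset.range n).biUnion (fun t => D ∩ g t)).card := by
    refine (Finset.card_biUnion fun a ha b hb hab => ?_).symm
    exact Finset.disjoint_of_subset_left Finset.inter_subset_right
      (Finset.disjoint_of_subset_right Finset.inter_subset_right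
        (hdis a (Finset.mem_range.mp ha) b (Finset.mem_range.mp hb) hab))
  have h4 : ((Finset.range n).biUnion (fun t => D ∩ g t)).card ≤ D.card := by
    refine Finset.card_le_card fun x hx => ?_
    obtain ⟨t, -, hxt⟩ := Finset.mem_biUnion.mp hx
    exact (Finset.mem_inter.mp hxt).1
  omega

lemma card_blockE {r j : ℕ} : (blockE r j).card = r := by
  rw [blockE, Nat.card_Ico]; omega

lemma card_connE {q r j : ℕ} (hr : 2 ≤ r) (hj : j < q-1) : (connE q r j).card = r := by
  have h1 : (j+1)*r ≤ q*r := Nat.mul_le_mul_right _ (by omega)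
  have h0 : (j+2)*r ≤ q*r := Nat.mul_le_mul_right _ (by omega)
  have h0' : (j+1)*r + r = (j+2)*r := by ring
  have h1' : j*r + r = (j+1)*r := by ring
  rw [connE, Finset.card_insert_of_notMem, Finset.card_insert_of_notMem, Nat.card_Ico]
  · omega
  · simp only [Finset.mem_Ico]; omega
  · simp only [Finset.mem_insert, Finset.mem_Ico]; omega

lemma card_pend1E {q r i : ℕ} (hq : 1 ≤ q) (hr : 2 ≤ r) : (pend1E q r i).card = r := by
  have h1 : ((q-1)+1)*r = q*r := by rw [show q-1+1 = q from by omega]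
  have h1' : (q-1)*r + r = ((q-1)+1)*r := by ring
  have h4 : q*r ≤ Bo q r := Nat.le_add_right _ _
  rw [pend1E, Finset.card_insert_of_notMem, Nat.card_Ico]
  · omega
  · simp only [Finset.mem_Ico]; omega

lemma card_pend2E {q r i : ℕ} : (pend2E q r i).card = r := by
  rw [pend2E, Nat.card_Ico]; omega

lemma IG_uniform {q r k : ℕ} (hq : 1 ≤ q) (hr : 2 ≤ r) : (IG q r k).IsUniform r := by
  intro e he
  rcases (mem_edges hq hr).mp he with ⟨j, hj, rfl⟩ | ⟨j, hj, rfl⟩ | ⟨i, hi, rfl⟩ | ⟨i, hi, rfl⟩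
  · exact card_blockE
  · exact card_connE hr hj
  · exact card_pend1E hq hr
  · exact card_pend2E

lemma interval_decomp {a m n v : ℕ} (hm : 0 < m) (h1 : a ≤ v) (h2 : v < a + n*m) :
    ∃ i, i < n ∧ a + i*m ≤ v ∧ v < a + i*m + m := by
  have hd : m * ((v-a)/m) + (v-a) % m = v - a := Nat.div_add_mod _ _
  have hml : (v-a) % m < m := Nat.mod_lt _ hm
  have hco : m * ((v-a)/m) = ((v-a)/m) * m := Nat.mul_comm _ _
  refine ⟨(v-a)/m, ?_, by omega, by omega⟩
  by_contra hcon
  have hge : n*m ≤ ((v-a)/m)*m := Nat.mul_le_mul_right _ (by omega)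
  omega

/-- Every vertex other than the `s_i` lies on an edge through some block
leader `j*r`, `j < q`. -/
lemma cover {q r k : ℕ} (hq : 1 ≤ q) (hr : 2 ≤ r) {v : ℕ} (hv : v < T q r k)
    (hs : ∀ i < k-1, v ≠ Bo q r + i*r + (r-1)) :
    ∃ e ∈ (IG q r k).edges, v ∈ e ∧ ∃ j < q, j*r ∈ e := by
  have hT : T q r k = Bo q r + (k-1)*r := rfl
  have hBo : Bo q r = q*r + (q-1)*(r-2) := rfl
  rcases lt_or_ge v (q*r) with hcase | hcase
  · obtain ⟨j, hjq, hjl, hju⟩ :=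
      interval_decomp (show 0 < r by omega) (Nat.zero_le v) (show v < 0 + q*r by omega)
    refine ⟨blockE r j, (mem_edges hq hr).mpr (Or.inl ⟨j, hjq, rfl⟩), ?_, j, hjq, ?_⟩
    · simp only [blockE, Finset.mem_Ico]; omega
    · simp only [blockE, Finset.mem_Ico]; omega
  rcases lt_or_ge v (Bo q r) with hcase2 | hcase2
  · have hrm : 0 < r - 2 := by
      rcases Nat.eq_zero_or_pos (r-2) with h0 | h0
      · have : (q-1)*(r-2) = 0 := by rw [h0, Nat.mul_zero]
        omega
      · exact h0
    obtain ⟨j, hjq, hjl, hju⟩ := interval_decomp hrm hcase (show v < q*r + (q-1)*(r-2) by omega)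
    refine ⟨connE q r j, (mem_edges hq hr).mpr (Or.inr (Or.inl ⟨j, hjq, rfl⟩)), ?_, j, by omega,
      Finset.mem_insert_self _ _⟩
    simp only [connE, Finset.mem_insert, Finset.mem_Ico]
    right; right; exact ⟨hjl, hju⟩
  · obtain ⟨i, hik, hil, hiu⟩ :=
      interval_decomp (show 0 < r by omega) hcase2 (show v < Bo q r + (k-1)*r by omega)
    have hp : v < Bo q r + i*r + (r-1) := by
      rcases lt_or_ge v (Bo q r + i*r + (r-1)) with h | h
      · exact h
      · exact absurd (show v = Bo q r + i*r + (r-1) by omega) (hs i hik)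
    refine ⟨pend1E q r i, (mem_edges hq hr).mpr (Or.inr (Or.inr (Or.inl ⟨i, hik, rfl⟩))), ?_,
      q-1, by omega, Finset.mem_insert_self _ _⟩
    simp only [pend1E, Finset.mem_insert, Finset.mem_Ico]
    right; exact ⟨hil, hp⟩

/-- The only edge through a non-leader block vertex is its own block edge. -/
lemma edge_of_private {q r k j p : ℕ} (hq : 1 ≤ q) (hr : 2 ≤ r) (hj : j < q)
    (h1 : j*r < p) (h2 : p < j*r + r) {e : Finset ℕ}
    (he : e ∈ (IG q r k).edges) (hp : p ∈ e) : e = blockE r j := by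
  have hBo : Bo q r = q*r + (q-1)*(r-2) := rfl
  have e1 : j*r + r = (j+1)*r := by ring
  have hpq : p < q*r := by
    have := Nat.mul_le_mul_right r (show j+1 ≤ q by omega)
    omega
  have hmul : ∀ m : ℕ, p ≠ m*r := by
    intro m heq
    rcases le_or_gt m j with h | h
    · have := Nat.mul_le_mul_right r h
      omega
    · have := Nat.mul_le_mul_right r (show j+1 ≤ m from h)
      omega
  rcases (mem_edges hq hr).mp he with ⟨j', hj', rfl⟩ | ⟨j', hj', rfl⟩ | ⟨i, hi, rfl⟩ | ⟨i, hi, rfl⟩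
  · simp only [blockE, Finset.mem_Ico] at hp
    have e2 : j'*r + r = (j'+1)*r := by ring
    have b1 : j' < j+1 := Nat.lt_of_mul_lt_mul_right (show j'*r < (j+1)*r by omega)
    have b2 : j < j'+1 := Nat.lt_of_mul_lt_mul_right (show j*r < (j'+1)*r by omega)
    have : j' = j := by omega
    rw [this]
  · exfalso
    simp only [connE, Finset.mem_insert, Finset.mem_Ico] at hp
    rcases hp with rfl | rfl | hp
    · exact hmul j' rfl
    · exact hmul (j'+1) rfl
    · omega
  · exfalso
    simp only [pend1E, Finset.mem_insert, Finset.mem_Ico] at hp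
    rcases hp with rfl | hp
    · exact hmul (q-1) rfl
    · omega
  · exfalso
    simp only [pend2E, Finset.mem_Ico] at hp
    omega

/-- The only edge through `s_i` is the second pendant edge `pend2E i`. -/
lemma edge_of_s {q r k i : ℕ} (hq : 1 ≤ q) (hr : 2 ≤ r) (hi : i < k-1) {e : Finset ℕ}
    (he : e ∈ (IG q r k).edges) (hp : Bo q r + i*r + (r-1) ∈ e) : e = pend2E q r i := by
  have hBo : Bo q r = q*r + (q-1)*(r-2) := rfl
  have c3 : ((q-1)+1)*r = q*r := by rw [show q-1+1 = q from by omega]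
  have c2 : (q-1)*r + r = ((q-1)+1)*r := by ring
  rcases (mem_edges hq hr).mp he with ⟨j', hj', rfl⟩ | ⟨j', hj', rfl⟩ | ⟨i', hi', rfl⟩ | ⟨i', hi', rfl⟩
  · exfalso
    simp only [blockE, Finset.mem_Ico] at hp
    have e2 : j'*r + r = (j'+1)*r := by ring
    have := Nat.mul_le_mul_right r (show j'+1 ≤ q by omega)
    omega
  · exfalso
    simp only [connE, Finset.mem_insert, Finset.mem_Ico] at hp
    have d1 : (j'+1)*r ≤ (q-1)*r := Nat.mul_le_mul_right _ (by omega)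
    have d2 : j'*r ≤ (j'+1)*r := Nat.mul_le_mul_right _ (by omega)
    have d3 : (j'+1)*(r-2) ≤ (q-1)*(r-2) := Nat.mul_le_mul_right _ (by omega)
    have d4 : j'*(r-2) + (r-2) = (j'+1)*(r-2) := by ring
    rcases hp with h | h | h <;> omega
  · exfalso
    simp only [pend1E, Finset.mem_insert, Finset.mem_Ico] at hp
    rcases hp with h | h
    · omega
    · have d1 : i*r + r = (i+1)*r := by ring
      have d2 : i' < i + 1 := Nat.lt_of_mul_lt_mul_right (show i'*r < (i+1)*r by omega)
      have d3 : i < i' := Nat.lt_of_mul_lt_mul_right (show i*r < i'*r by omega)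
      omega
  · simp only [pend2E, Finset.mem_Ico] at hp
    have d1 : i*r + r = (i+1)*r := by ring
    have d1' : i'*r + r = (i'+1)*r := by ring
    have d2 : i' < i + 1 := Nat.lt_of_mul_lt_mul_right (show i'*r < (i+1)*r by omega)
    have d3 : i < i' + 1 := Nat.lt_of_mul_lt_mul_right (show i*r < (i'+1)*r by omega)
    have : i' = i := by omega
    rw [this]

lemma leader_to_zero {q r k : ℕ} (hq : 1 ≤ q) (hr : 2 ≤ r) :
    ∀ j, j < q → Relation.ReflTransGen (IG q r k).edgeRel (j*r) 0 := by
  intro j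
  induction j with
  | zero =>
    intro _
    rw [Nat.zero_mul]
  | succ n ih =>
    intro hn
    have hn' : n < q - 1 := by omega
    refine Relation.ReflTransGen.head
      ⟨connE q r n, (mem_edges hq hr).mpr (Or.inr (Or.inl ⟨n, hn', rfl⟩)), ?_, ?_⟩
      (ih (by omega))
    · exact Finset.mem_insert_of_mem (Finset.mem_insert_self _ _)
    · exact Finset.mem_insert_self _ _

lemma IG_connected {q r k : ℕ} (hq : 1 ≤ q) (hr : 2 ≤ r) : (IG q r k).Connected := by
  have hto : ∀ v, v < T q r k → Relation.ReflTransGen (IG q r k).edgeRel v 0 := by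
    intro v hv
    by_cases hs : ∃ i, i < k-1 ∧ v = Bo q r + i*r + (r-1)
    · obtain ⟨i, hik, rfl⟩ := hs
      have hmem1 : Bo q r + i*r ∈ pend2E q r i := by
        simp only [pend2E, Finset.mem_Ico]; omega
      have hmemv : Bo q r + i*r + (r-1) ∈ pend2E q r i := by
        simp only [pend2E, Finset.mem_Ico]; omega
      have hmem2 : Bo q r + i*r ∈ pend1E q r i := by
        simp only [pend1E, Finset.mem_insert, Finset.mem_Ico]
        right; omega
      refine Relation.ReflTransGen.head
        ⟨pend2E q r i, (mem_edges hq hr).mpr (Or.inr (Or.inr (Or.inr ⟨i, hik, rfl⟩))), hmemv, hmem1⟩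
        (Relation.ReflTransGen.head
          ⟨pend1E q r i, (mem_edges hq hr).mpr (Or.inr (Or.inr (Or.inl ⟨i, hik, rfl⟩))), hmem2,
            Finset.mem_insert_self _ _⟩
          (leader_to_zero hq hr (q-1) (by omega)))
    · push_neg at hs
      obtain ⟨e, he, hve, j, hj, hje⟩ := cover hq hr hv (fun i h => hs i h)
      exact Relation.ReflTransGen.head ⟨e, he, hve, hje⟩ (leader_to_zero hq hr j hj)
  have hsymm : Symmetric (IG q r k).edgeRel := by
    rintro a b ⟨e, he, ha, hb⟩
    exact ⟨e, he, hb, ha⟩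
  intro v hv w hw
  exact (hto v (mem_verts.mp hv)).trans
    ((@Std.Symm.symm _ _ (@Relation.ReflTransGen.stdSymm _ _ ⟨fun a b h => hsymm h⟩) _ _) (hto w (mem_verts.mp hw)))

def D0 (q r : ℕ) : Finset ℕ := (Finset.range q).image (fun j => j*r)

lemma mem_D0 {q r x : ℕ} : x ∈ D0 q r ↔ ∃ j < q, x = j*r := by
  simp only [D0, Finset.mem_image, Finset.mem_range]
  constructor
  · rintro ⟨j, hj, rfl⟩; exact ⟨j, hj, rfl⟩
  · rintro ⟨j, hj, rfl⟩; exact ⟨j, hj, rfl⟩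

lemma card_D0 {q r : ℕ} (hr : 2 ≤ r) : (D0 q r).card = q := by
  rw [D0, Finset.card_image_of_injective _
    (fun a b h => Nat.eq_of_mul_eq_mul_right (by omega) h), Finset.card_range]

lemma D0_subset {q r k : ℕ} (hr : 2 ≤ r) : D0 q r ⊆ (IG q r k).verts := by
  intro x hx
  obtain ⟨j, hj, rfl⟩ := mem_D0.mp hx
  rw [mem_verts]
  have h1 : (j+1)*r ≤ q*r := Nat.mul_le_mul_right _ (by omega)
  have h2 : j*r + r = (j+1)*r := by ring
  have hT : T q r k = q*r + (q-1)*(r-2) + (k-1)*r := rfl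
  omega

lemma blockE_disjoint {r : ℕ} {a b : ℕ} (hab : a ≠ b) : Disjoint (blockE r a) (blockE r b) := by
  rw [Finset.disjoint_left]
  intro x hxa hxb
  simp only [blockE, Finset.mem_Ico] at hxa hxb
  have e1 : a*r + r = (a+1)*r := by ring
  have e2 : b*r + r = (b+1)*r := by ring
  have l1 : a < b+1 := Nat.lt_of_mul_lt_mul_right (show a*r < (b+1)*r by omega)
  have l2 : b < a+1 := Nat.lt_of_mul_lt_mul_right (show b*r < (a+1)*r by omega)
  omega

lemma IG_iso {q r k : ℕ} (hq : 1 ≤ q) (hk : 1 ≤ k) (hkr : k < r) : (IG q r k).iso k r = q := by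
  have hr : 2 ≤ r := by omega
  have hmem : q ∈ {n | ∃ D, (IG q r k).IsIsolating k r D ∧ D.card = n} := by
    refine ⟨D0 q r, ?_, card_D0 hr⟩
    rw [isolating_iff hkr]
    refine ⟨D0_subset hr, ?_⟩
    have hsub2 : (IG q r k).verts \ (IG q r k).closedNbhd (D0 q r) ⊆
        (Finset.range (k-1)).image (fun i => Bo q r + i*r + (r-1)) := by
      intro v hv
      obtain ⟨hv1, hv2⟩ := Finset.mem_sdiff.mp hv
      by_contra hnot
      have hs : ∀ i < k-1, v ≠ Bo q r + i*r + (r-1) := by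
        intro i hi heq
        exact hnot (Finset.mem_image.mpr ⟨i, Finset.mem_range.mpr hi, heq.symm⟩)
      obtain ⟨e, he, hve, j, hj, hje⟩ := cover hq hr (mem_verts.mp hv1) hs
      exact hv2 (mem_closedNbhd.mpr (Or.inr ⟨hv1, e, he, hve, j*r,
        mem_D0.mpr ⟨j, hj, rfl⟩, hje⟩))
    have hc1 := Finset.card_le_card hsub2
    have hc2 : ((Finset.range (k-1)).image (fun i => Bo q r + i*r + (r-1))).card ≤ k-1 := by
      calc ((Finset.range (k-1)).image (fun i => Bo q r + i*r + (r-1))).card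
          ≤ (Finset.range (k-1)).card := Finset.card_image_le
        _ = k-1 := Finset.card_range _
    omega
  refine le_antisymm (Nat.sInf_le hmem) (le_csInf ⟨q, hmem⟩ ?_)
  rintro n ⟨D, hD, rfl⟩
  rw [isolating_iff hkr] at hD
  obtain ⟨hDsub, hDcard⟩ := hD
  refine card_lb D q (blockE r) (fun a _ b _ hab => blockE_disjoint hab) ?_
  intro j hj
  by_contra hemp
  rw [Finset.not_nonempty_iff_eq_empty] at hemp
  have hnone : ∀ x ∈ D, x ∉ blockE r j := by
    intro x hx hxb
    have hxm : x ∈ D ∩ blockE r j := Finset.mem_inter.mpr ⟨hx, hxb⟩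
    rw [hemp] at hxm
    exact absurd hxm (Finset.notMem_empty x)
  have hsubP : Finset.Ico (j*r+1) (j*r+r) ⊆
      (IG q r k).verts \ (IG q r k).closedNbhd D := by
    intro p hp
    simp only [Finset.mem_Ico] at hp
    have hpv : p ∈ (IG q r k).verts := by
      rw [mem_verts]
      have h1 : (j+1)*r ≤ q*r := Nat.mul_le_mul_right _ (by omega)
      have h2 : j*r + r = (j+1)*r := by ring
      have hT : T q r k = q*r + (q-1)*(r-2) + (k-1)*r := rfl
      omega
    rw [Finset.mem_sdiff]
    refine ⟨hpv, fun hcl => ?_⟩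
    rcases mem_closedNbhd.mp hcl with hpD | ⟨-, e, he, hpe, u, huD, hue⟩
    · exact hnone p hpD (by simp only [blockE, Finset.mem_Ico]; omega)
    · have heq := edge_of_private hq hr hj (show j*r < p by omega) hp.2 he hpe
      rw [heq] at hue
      exact hnone u huD hue
  have hcards := Finset.card_le_card hsubP
  rw [Nat.card_Ico] at hcards
  omega

def Dp (q r k : ℕ) : Finset ℕ := (Finset.range (k-1)).image (fun i => Bo q r + i*r)

lemma IG_dom {q r k : ℕ} (hq : 1 ≤ q) (hk : 1 ≤ k) (hkr : k < r) :
    (IG q r k).domNum = q + k - 1 := by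
  have hr : 2 ≤ r := by omega
  have hBo : Bo q r = q*r + (q-1)*(r-2) := rfl
  have hT : T q r k = Bo q r + (k-1)*r := rfl
  have hdisj : Disjoint (D0 q r) (Dp q r k) := by
    rw [Finset.disjoint_left]
    intro x hx0 hxp
    obtain ⟨j, hj, rfl⟩ := mem_D0.mp hx0
    obtain ⟨i, hi, heq⟩ := Finset.mem_image.mp hxp
    have h1 : (j+1)*r ≤ q*r := Nat.mul_le_mul_right _ (by omega)
    have h2 : j*r + r = (j+1)*r := by ring
    omega
  have hmem : q + k - 1 ∈ {n | ∃ D, (IG q r k).IsDominating D ∧ D.card = n} := by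
    refine ⟨D0 q r ∪ Dp q r k, ⟨?_, ?_⟩, ?_⟩
    · intro x hx
      rcases Finset.mem_union.mp hx with hx | hx
      · exact D0_subset hr hx
      · obtain ⟨i, hi, rfl⟩ := Finset.mem_image.mp hx
        rw [Finset.mem_range] at hi
        rw [mem_verts]
        have h2 : (i+1)*r ≤ (k-1)*r := Nat.mul_le_mul_right _ (by omega)
        have h3 : i*r + r = (i+1)*r := by ring
        omega
    · intro v hv
      have hvT := mem_verts.mp hv
      by_cases hs : ∃ i, i < k-1 ∧ v = Bo q r + i*r + (r-1)
      · obtain ⟨i, hik, rfl⟩ := hs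
        refine mem_closedNbhd.mpr (Or.inr ⟨hv, pend2E q r i,
          (mem_edges hq hr).mpr (Or.inr (Or.inr (Or.inr ⟨i, hik, rfl⟩))), ?_,
          Bo q r + i*r, ?_, ?_⟩)
        · simp only [pend2E, Finset.mem_Ico]; omega
        · exact Finset.mem_union_right _
            (Finset.mem_image.mpr ⟨i, Finset.mem_range.mpr hik, rfl⟩)
        · simp only [pend2E, Finset.mem_Ico]; omega
      · push_neg at hs
        obtain ⟨e, he, hve, j, hj, hje⟩ := cover hq hr hvT (fun i h => hs i h)
        exact mem_closedNbhd.mpr (Or.inr ⟨hv, e, he, hve, j*r,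
          Finset.mem_union_left _ (mem_D0.mpr ⟨j, hj, rfl⟩), hje⟩)
    · rw [Finset.card_union_of_disjoint hdisj, card_D0 hr, Dp,
        Finset.card_image_of_injective _
          (fun a b h => by
            have := Nat.eq_of_mul_eq_mul_right (show 0 < r by omega)
              (show a*r = b*r by omega)
            exact this),
        Finset.card_range]
      omega
  refine le_antisymm (Nat.sInf_le hmem) (le_csInf ⟨_, hmem⟩ ?_)
  rintro n ⟨D, ⟨hDsub, hDdom⟩, rfl⟩
  have hcard : q + (k-1) ≤ D.card := by
    refine card_lb D (q + (k-1))
      (fun t => if t < q then blockE r t else pend2E q r (t - q)) ?_ ?_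
    · intro a ha b hb hab
      by_cases ha' : a < q <;> by_cases hb' : b < q
      · simp only [if_pos ha', if_pos hb']
        exact blockE_disjoint hab
      · simp only [if_pos ha', if_neg hb']
        rw [Finset.disjoint_left]
        intro x hxa hxb
        simp only [blockE, pend2E, Finset.mem_Ico] at hxa hxb
        have h1 : (a+1)*r ≤ q*r := Nat.mul_le_mul_right _ (by omega)
        have h2 : a*r + r = (a+1)*r := by ring
        omega
      · simp only [if_neg ha', if_pos hb']
        rw [Finset.disjoint_left]
        intro x hxa hxb
        simp only [blockE, pend2E, Finset.mem_Ico] at hxa hxb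
        have h1 : (b+1)*r ≤ q*r := Nat.mul_le_mul_right _ (by omega)
        have h2 : b*r + r = (b+1)*r := by ring
        omega
      · simp only [if_neg ha', if_neg hb']
        rw [Finset.disjoint_left]
        intro x hxa hxb
        simp only [pend2E, Finset.mem_Ico] at hxa hxb
        have e1 : (a-q)*r + r = (a-q+1)*r := by ring
        have e2 : (b-q)*r + r = (b-q+1)*r := by ring
        have l1 : a-q < b-q+1 :=
          Nat.lt_of_mul_lt_mul_right (show (a-q)*r < (b-q+1)*r by omega)
        have l2 : b-q < a-q+1 :=
          Nat.lt_of_mul_lt_mul_right (show (b-q)*r < (a-q+1)*r by omega)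
        omega
    · intro t ht
      by_cases ht' : t < q
      · simp only [if_pos ht']
        have hpv : t*r + 1 ∈ (IG q r k).verts := by
          rw [mem_verts]
          have h1 : (t+1)*r ≤ q*r := Nat.mul_le_mul_right _ (by omega)
          have h2 : t*r + r = (t+1)*r := by ring
          omega
        rcases mem_closedNbhd.mp (hDdom hpv) with hpD | ⟨-, e, he, hpe, u, huD, hue⟩
        · exact ⟨t*r+1, Finset.mem_inter.mpr ⟨hpD,
            by simp only [blockE, Finset.mem_Ico]; omega⟩⟩
        · have heq := edge_of_private hq hr ht' (show t*r < t*r+1 by omega)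
            (show t*r+1 < t*r + r by omega) he hpe
          rw [heq] at hue
          exact ⟨u, Finset.mem_inter.mpr ⟨huD, hue⟩⟩
      · simp only [if_neg ht']
        have hik : t - q < k - 1 := by omega
        have hsv : Bo q r + (t-q)*r + (r-1) ∈ (IG q r k).verts := by
          rw [mem_verts]
          have h2 : (t-q+1)*r ≤ (k-1)*r := Nat.mul_le_mul_right _ (by omega)
          have h3 : (t-q)*r + r = (t-q+1)*r := by ring
          omega
        rcases mem_closedNbhd.mp (hDdom hsv) with hpD | ⟨-, e, he, hpe, u, huD, hue⟩
        · exact ⟨_, Finset.mem_inter.mpr ⟨hpD,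
            by simp only [pend2E, Finset.mem_Ico]; omega⟩⟩
        · have heq := edge_of_s hq hr hik he hpe
          rw [heq] at hue
          exact ⟨u, Finset.mem_inter.mpr ⟨huD, hue⟩⟩
  omega

end IsoTight

/-- For every `q ≥ 1` and `1 ≤ k < r` there is a connected `r`-graph `I` with
`ι(I, K_k^r) = q` and `γ(I) = q + k − 1`; the bound `γ − k + 1 ≤ ι` is tight. -/
theorem stmt11 (q r k : ℕ) (hq : 1 ≤ q) (hk : 1 ≤ k) (hkr : k < r) :
    ∃ I : FinHypergraph ℕ, I.Connected ∧ I.IsUniform r ∧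
      I.iso k r = q ∧ I.domNum = q + k - 1 := by
  have hr : 2 ≤ r := by omega
  exact ⟨IsoTight.IG q r k, IsoTight.IG_connected hq hr, IsoTight.IG_uniform hq hr,
    IsoTight.IG_iso hq hk hkr, IsoTight.IG_dom hq hk hkr⟩
end
end

section
/- Let 2 ≤ r ≤ k and let H be a pure (n, K_k^r)-good r-uniform hypergraph with q = n/(k+1) constituents, q ≥ 1. Then ι(H, K_k^r) = q = n/(k+1). -/
open scoped Classical

noncomputable section

open FinHypergraph

/-- For `2 ≤ r ≤ k`, a pure `(n, K_k^r)`-good `r`-graph `H` with `q ≥ 1`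
constituents satisfies `ι(H, K_k^r) = q` and `n = q(k+1)`.
Here `H` is built from pairwise disjoint `K_k^r`-copies with vertex sets
`F 1, …, F q`, connection vertices `v 1, …, v q`, nonempty families `W i` of
`r`-subsets of `{v i} ∪ F i` containing `v i`, and a connected quotient
`r`-graph `T` on `{v 1, …, v q}`. -/
theorem stmt12 {V : Type*} [DecidableEq V] (r k q : ℕ) (hr : 2 ≤ r) (hrk : r ≤ k)
    (hq : 1 ≤ q) (H T : FinHypergraph V)
    (F : Fin q → Finset V) (v : Fin q → V) (W : Fin q → Finset (Finset V))
    (hFcard : ∀ i, (F i).card = k)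
    (hvinj : Function.Injective v)
    (hvF : ∀ i j, v i ∉ F j)
    (hFdisj : ∀ i j, i ≠ j → Disjoint (F i) (F j))
    (hW : ∀ i, (W i).Nonempty ∧
      ∀ e ∈ W i, e ⊆ insert (v i) (F i) ∧ v i ∈ e ∧ e.card = r)
    (hT : T.Connected) (hTverts : T.verts = Finset.univ.image v)
    (hTunif : T.IsUniform r)
    (hverts : H.verts = Finset.univ.biUnion (fun i => insert (v i) (F i)))
    (hedges : H.edges =
      T.edges ∪ Finset.univ.biUnion (fun i => (F i).powersetCard r ∪ W i)) :
    H.iso k r = q ∧ H.verts.card = q * (k + 1) := by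
  classical
  have hvertsmem : ∀ i, insert (v i) (F i) ⊆ H.verts := by
    intro i x hx
    rw [hverts]
    exact Finset.mem_biUnion.mpr ⟨i, Finset.mem_univ i, hx⟩
  have hVidisj : ∀ i j : Fin q, i ≠ j →
      Disjoint (insert (v i) (F i)) (insert (v j) (F j)) := by
    intro i j hij
    rw [Finset.disjoint_left]
    intro x hx hx'
    rcases Finset.mem_insert.mp hx with h1 | h1 <;>
      rcases Finset.mem_insert.mp hx' with h2 | h2
    · exact hij (hvinj (h1 ▸ h2))
    · exact hvF i j (h1 ▸ h2)
    · exact hvF j i (h2 ▸ h1)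
    · exact Finset.disjoint_left.mp (hFdisj i j hij) h1 h2
  have hvcard : H.verts.card = q * (k + 1) := by
    rw [hverts, Finset.card_biUnion (fun i _ j _ hij => hVidisj i j hij)]
    have hc : ∀ i : Fin q, (insert (v i) (F i)).card = k + 1 := fun i => by
      rw [Finset.card_insert_of_notMem (hvF i i), hFcard]
    simp [hc, Finset.sum_const, mul_comm]
  have hedgecases : ∀ e ∈ H.edges, e ∈ T.edges ∨ ∃ i, e ⊆ insert (v i) (F i) := by
    intro e he
    rw [hedges, Finset.mem_union] at he
    rcases he with h | h
    · exact Or.inl h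
    · right
      obtain ⟨i, -, hi⟩ := Finset.mem_biUnion.mp h
      refine ⟨i, ?_⟩
      rcases Finset.mem_union.mp hi with h' | h'
      · exact (Finset.mem_powersetCard.mp h').1.trans (Finset.subset_insert _ _)
      · exact ((hW i).2 e h').1
  -- lower bound
  have hlow : ∀ D : Finset V, H.IsIsolating k r D → q ≤ D.card := by
    intro D hD
    obtain ⟨hDsub, hno⟩ := hD
    have hhit : ∀ i : Fin q, ((insert (v i) (F i)) ∩ D).Nonempty := by
      intro i
      by_contra hemp
      rw [Finset.not_nonempty_iff_eq_empty, ← Finset.disjoint_iff_inter_eq_empty] at hemp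
      apply hno
      have hFsub : F i ⊆ H.verts \ H.closedNbhd D := by
        intro x hx
        have hxV : x ∈ H.verts := hvertsmem i (Finset.mem_insert_of_mem hx)
        refine Finset.mem_sdiff.mpr ⟨hxV, ?_⟩
        intro hxc
        rw [FinHypergraph.closedNbhd, Finset.mem_union] at hxc
        rcases hxc with hxD | hxf
        · exact Finset.disjoint_left.mp hemp (Finset.mem_insert_of_mem hx) hxD
        · obtain ⟨e, he, hxe, d, hdD, hde⟩ := (Finset.mem_filter.mp hxf).2
          rcases hedgecases e he with hT' | ⟨j, hj⟩
          · have hxT : x ∈ T.verts := T.edge_sub e hT' hxe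
            rw [hTverts, Finset.mem_image] at hxT
            obtain ⟨m, -, hm⟩ := hxT
            exact hvF m i (hm ▸ hx)
          · have hxj : x ∈ insert (v j) (F j) := hj hxe
            have hij : i = j := by
              rcases Finset.mem_insert.mp hxj with h' | h'
              · exact absurd (h' ▸ hx) (hvF j i)
              · by_contra hne
                exact Finset.disjoint_left.mp (hFdisj i j hne) hx h'
            subst hij
            exact Finset.disjoint_left.mp hemp (hj hde) hdD
      refine ⟨F i, ?_, hFcard i, ?_⟩
      · exact hFsub
      · intro A hA
        have hAF := (Finset.mem_powersetCard.mp hA).1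
        refine Finset.mem_filter.mpr ⟨?_, hAF.trans hFsub⟩
        rw [hedges, Finset.mem_union]
        exact Or.inr (Finset.mem_biUnion.mpr
          ⟨i, Finset.mem_univ i, Finset.mem_union_left _ hA⟩)
    calc q = ∑ _i : Fin q, 1 := by simp
      _ ≤ ∑ i : Fin q, ((insert (v i) (F i)) ∩ D).card :=
          Finset.sum_le_sum (fun i _ => Finset.card_pos.mpr (hhit i))
      _ = (Finset.univ.biUnion (fun i => (insert (v i) (F i)) ∩ D)).card :=
          (Finset.card_biUnion (fun i _ j _ hij =>
            ((hVidisj i j hij).mono Finset.inter_subset_left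
              Finset.inter_subset_left))).symm
      _ ≤ D.card := Finset.card_le_card (by
          intro x hx
          obtain ⟨i, -, h⟩ := Finset.mem_biUnion.mp hx
          exact (Finset.mem_inter.mp h).2)
  -- upper bound: D0 = image v
  set D0 : Finset V := Finset.univ.image v with hD0
  have hD0card : D0.card = q := by
    rw [hD0, Finset.card_image_of_injective _ hvinj, Finset.card_univ, Fintype.card_fin]
  have hD0iso : H.IsIsolating k r D0 := by
    constructor
    · intro x hx
      obtain ⟨i, -, rfl⟩ := Finset.mem_image.mp hx
      exact hvertsmem i (Finset.mem_insert_self _ _)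
    · rintro ⟨S, hSsub, hScard, hSedges⟩
      have hSX : S ⊆ H.verts \ H.closedNbhd D0 := hSsub
      have hvcl : ∀ j, v j ∈ H.closedNbhd D0 := fun j =>
        Finset.mem_union_left _ (Finset.mem_image.mpr ⟨j, Finset.mem_univ j, rfl⟩)
      have hSv : ∀ x ∈ S, ∀ j, x ≠ v j := by
        intro x hx j hxv
        exact (Finset.mem_sdiff.mp (hSX hx)).2 (hxv ▸ hvcl j)
      obtain ⟨x, hxS⟩ := Finset.card_pos.mp (by rw [hScard]; omega)
      have hxV : x ∈ H.verts := (Finset.mem_sdiff.mp (hSX hxS)).1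
      rw [hverts] at hxV
      obtain ⟨i, -, hxVi⟩ := Finset.mem_biUnion.mp hxV
      have hxFi : x ∈ F i := by
        rcases Finset.mem_insert.mp hxVi with h | h
        · exact absurd h (hSv x hxS i)
        · exact h
      have hSF : S ⊆ F i := by
        intro y hyS
        by_cases hxy : y = x
        · exact hxy ▸ hxFi
        · have hpair : ({x, y} : Finset V) ⊆ S := by
            intro z hz
            rcases Finset.mem_insert.mp hz with rfl | hz
            · exact hxS
            · exact (Finset.mem_singleton.mp hz) ▸ hyS
          have hpc : ({x, y} : Finset V).card ≤ r := by
            have := Finset.card_insert_le x ({y} : Finset V)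
            simp only [Finset.card_singleton] at this
            omega
          obtain ⟨A, hsubA, hAS, hAcard⟩ :=
            Finset.exists_subsuperset_card_eq hpair hpc (by rw [hScard]; exact hrk)
          have hAedge := hSedges A (Finset.mem_powersetCard.mpr ⟨hAS, hAcard⟩)
          obtain ⟨hAH, hAX⟩ := Finset.mem_filter.mp hAedge
          have hxA : x ∈ A := hsubA (Finset.mem_insert_self _ _)
          have hyA : y ∈ A := hsubA (by simp)
          rcases hedgecases A hAH with hT' | ⟨j, hj⟩
          · have hxT : x ∈ T.verts := T.edge_sub A hT' hxA
            rw [hTverts, Finset.mem_image] at hxT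
            obtain ⟨m, -, hm⟩ := hxT
            exact absurd hm.symm (hSv x hxS m)
          · have hxFj : x ∈ F j := by
              rcases Finset.mem_insert.mp (hj hxA) with h | h
              · exact absurd h (hSv x hxS j)
              · exact h
            have hij : j = i := by
              by_contra hne
              exact Finset.disjoint_left.mp (hFdisj j i hne) hxFj hxFi
            rcases Finset.mem_insert.mp (hj hyA) with h | h
            · exact absurd h (hSv y hyS j)
            · exact hij ▸ h
      have hSeq : S = F i :=
        Finset.eq_of_subset_of_card_le hSF (by rw [hScard, hFcard])
      obtain ⟨e, heW⟩ := (hW i).1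
      obtain ⟨heVi, hvie, hecard⟩ := (hW i).2 e heW
      obtain ⟨u, hue, huv⟩ := Finset.exists_mem_ne (s := e) (by omega) (v i)
      have huF : u ∈ F i := by
        rcases Finset.mem_insert.mp (heVi hue) with h | h
        · exact absurd h huv
        · exact h
      have huV : u ∈ H.verts := hvertsmem i (Finset.mem_insert_of_mem huF)
      have heH : e ∈ H.edges := by
        rw [hedges, Finset.mem_union]
        exact Or.inr (Finset.mem_biUnion.mpr
          ⟨i, Finset.mem_univ i, Finset.mem_union_right _ heW⟩)
      have hucl : u ∈ H.closedNbhd D0 := by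
        refine Finset.mem_union_right _ (Finset.mem_filter.mpr ⟨huV, ?_⟩)
        exact ⟨e, heH, hue, v i, Finset.mem_image.mpr ⟨i, Finset.mem_univ i, rfl⟩, hvie⟩
      have huS : u ∈ S := hSeq ▸ huF
      exact (Finset.mem_sdiff.mp (hSX huS)).2 hucl
  have hmem : q ∈ {n | ∃ D : Finset V, H.IsIsolating k r D ∧ D.card = n} :=
    ⟨D0, hD0iso, hD0card⟩
  refine ⟨?_, hvcard⟩
  refine le_antisymm (Nat.sInf_le hmem) ?_
  obtain ⟨D, hD, hcard⟩ := Nat.sInf_mem (⟨q, hmem⟩ :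
    {n | ∃ D : Finset V, H.IsIsolating k r D ∧ D.card = n}.Nonempty)
  show q ≤ sInf {n | ∃ D : Finset V, H.IsIsolating k r D ∧ D.card = n}
  exact hcard ▸ hlow D hD
end
end

section
/- Let H = H_4^4 be the 4-uniform hypergraph on vertex set {a_1,...,a_10} with edges e_1 = {a_1,a_2,a_5,a_6}, e_2 = {a_1,a_6,a_7,a_10}, e_3 = {a_2,a_3,a_4,a_5}, e_4 = {a_3,a_4,a_8,a_9}, e_5 = {a_7,a_8,a_9,a_10}. Then H is connected and ι(H, K_4^4) = 2 = 10/5, so H attains the bound ι(H, K_k^r) ≤ n/(k+1) with k = r = 4 and n = 10. -/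
open scoped Classical

noncomputable section

open FinHypergraph

/-- The 4-uniform hypergraph `H₄⁴` on vertices `{1, …, 10}`. -/
def H44 : FinHypergraph ℕ where
  verts := Finset.Icc 1 10
  edges := {{1,2,5,6},{1,6,7,10},{2,3,4,5},{3,4,8,9},{7,8,9,10}}
  edge_sub := by decide

lemma h44_edgeRel_symm : Symmetric H44.edgeRel := fun _ _ ⟨e, he, hv, hw⟩ => ⟨e, he, hw, hv⟩

lemma h44_from_one : ∀ v ∈ H44.verts, Relation.ReflTransGen H44.edgeRel 1 v := by
  have r12 : H44.edgeRel 1 2 := ⟨{1,2,5,6}, by decide, by decide, by decide⟩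
  have r23 : H44.edgeRel 2 3 := ⟨{2,3,4,5}, by decide, by decide, by decide⟩
  have r24 : H44.edgeRel 2 4 := ⟨{2,3,4,5}, by decide, by decide, by decide⟩
  have r15 : H44.edgeRel 1 5 := ⟨{1,2,5,6}, by decide, by decide, by decide⟩
  have r16 : H44.edgeRel 1 6 := ⟨{1,2,5,6}, by decide, by decide, by decide⟩
  have r17 : H44.edgeRel 1 7 := ⟨{1,6,7,10}, by decide, by decide, by decide⟩
  have r78 : H44.edgeRel 7 8 := ⟨{7,8,9,10}, by decide, by decide, by decide⟩
  have r79 : H44.edgeRel 7 9 := ⟨{7,8,9,10}, by decide, by decide, by decide⟩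
  have r110 : H44.edgeRel 1 10 := ⟨{1,6,7,10}, by decide, by decide, by decide⟩
  intro v hv
  fin_cases hv
  · exact .refl
  · exact .single r12
  · exact (Relation.ReflTransGen.single r12).tail r23
  · exact (Relation.ReflTransGen.single r12).tail r24
  · exact .single r15
  · exact .single r16
  · exact .single r17
  · exact (Relation.ReflTransGen.single r17).tail r78
  · exact (Relation.ReflTransGen.single r17).tail r79
  · exact .single r110

lemma h44_connected : H44.Connected := by
  intro v hv w hw
  exact ((@Relation.ReflTransGen.stdSymm _ _ ⟨fun _ _ h => h44_edgeRel_symm h⟩).symm _ _ (h44_from_one v hv)).trans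
    (h44_from_one w hw)

/-- If some edge survives deletion of `N[D]`, we get a clique copy. -/
lemma h44_copy_of_edge {D : Finset ℕ} {e : Finset ℕ} (he : e ∈ H44.edges)
    (hsub : e ⊆ H44.verts \ H44.closedNbhd D) :
    (H44.induce (H44.verts \ H44.closedNbhd D)).HasCliqueCopy 4 4 := by
  have hcard : e.card = 4 := by
    have h4 : ∀ e ∈ H44.edges, e.card = 4 := by decide
    exact h4 e he
  refine ⟨e, hsub, hcard, ?_⟩
  intro A hA
  rw [Finset.mem_powersetCard] at hA
  have hAe : A = e := Finset.eq_of_subset_of_card_le hA.1 (by omega)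
  subst hAe
  simp only [FinHypergraph.induce, Finset.mem_filter]
  exact ⟨he, hsub⟩

/-- Any isolating set has at least 2 elements. -/
lemma h44_lower {D : Finset ℕ} (h : H44.IsIsolating 4 4 D) : 2 ≤ D.card := by
  obtain ⟨hDsub, hniso⟩ := h
  by_contra hlt
  push_neg at hlt
  apply hniso
  rcases Finset.card_le_one_iff_subset_singleton.mp (by omega : D.card ≤ 1) with ⟨x, hx⟩
  rcases Finset.subset_singleton_iff.mp hx with rfl | rfl
  · exact h44_copy_of_edge (e := {1,2,5,6}) (by decide) (by decide)
  · have hxv : x ∈ H44.verts := hDsub (Finset.mem_singleton_self x)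
    fin_cases hxv
    · exact h44_copy_of_edge (e := {3,4,8,9}) (by decide) (by decide)
    · exact h44_copy_of_edge (e := {7,8,9,10}) (by decide) (by decide)
    · exact h44_copy_of_edge (e := {1,6,7,10}) (by decide) (by decide)
    · exact h44_copy_of_edge (e := {1,6,7,10}) (by decide) (by decide)
    · exact h44_copy_of_edge (e := {7,8,9,10}) (by decide) (by decide)
    · exact h44_copy_of_edge (e := {3,4,8,9}) (by decide) (by decide)
    · exact h44_copy_of_edge (e := {2,3,4,5}) (by decide) (by decide)
    · exact h44_copy_of_edge (e := {1,2,5,6}) (by decide) (by decide)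
    · exact h44_copy_of_edge (e := {1,2,5,6}) (by decide) (by decide)
    · exact h44_copy_of_edge (e := {2,3,4,5}) (by decide) (by decide)

/-- `{1, 8}` is an isolating set. -/
lemma h44_upper : H44.IsIsolating 4 4 ({1, 8} : Finset ℕ) := by
  refine ⟨by decide, ?_⟩
  rintro ⟨S, hS, hScard, -⟩
  have hempty : H44.verts \ H44.closedNbhd ({1, 8} : Finset ℕ) = ∅ := by decide
  rw [FinHypergraph.induce] at hS
  simp only [hempty] at hS
  have := Finset.card_le_card hS
  simp [hScard] at this

/-- `H₄⁴` is connected, has 10 vertices, and `ι(H₄⁴, K₄⁴) = 2 = 10/5`, attaining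
the bound `ι(H, K_k^r) ≤ n/(k+1)` with `k = r = 4`, `n = 10`. -/
theorem stmt18 :
    H44.Connected ∧ H44.verts.card = 10 ∧ H44.iso 4 4 = 2 := by
  refine ⟨h44_connected, by decide, ?_⟩
  have hmem : 2 ∈ {n | ∃ D : Finset ℕ, H44.IsIsolating 4 4 D ∧ D.card = n} :=
    ⟨{1, 8}, h44_upper, by decide⟩
  apply le_antisymm
  · exact Nat.sInf_le hmem
  · refine le_csInf ⟨2, hmem⟩ ?_
    rintro n ⟨D, hD, rfl⟩
    exact h44_lower hD
end
end
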